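/- The coefficient of z^k (k ≥ 0) in the expansion of (z - z^{-1}) · (1/(q;q)_∞²) Σ_{r∈Z} Σ_{m≥0} z^r (-1)^m q^{m(m+1)/2} q^{|r|(m+1/2)} equals, for k ≥ 1, (1/(q;q)_∞²) Σ_{m≥0} (-1)^m q^{m(m+1)/2} ( q^{(k-1)(m+1/2)} − q^{(k+1)(m+1/2)} ); equivalently, the q-dimension of the level −1 irreducible d_∞-module of highest weight Λ(k), k ∈ Z_+, is (1/(q;q)_∞²) Σ_{m≥0} (-1)^m q^{m(m+1)/2} ( q^{k(m+1/2)} − q^{(k+2)(m+1/2)} ). -/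

import Mathlib

open scoped BigOperators

/-- The infinite q-Pochhammer symbol `(a;q)_∞`. -/
noncomputable def qPochInf (a q : ℂ) : ℂ := ∏' i : ℕ, (1 - a * q ^ i)

/-- With `q = Q²`: `A_k = (1/(q;q)_∞²) Σ_{m≥0} (-1)^m q^{m(m+1)/2 + k(m+1/2)}`. -/
noncomputable def Acoef (Q : ℂ) (k : ℕ) : ℂ :=
  (1 / (qPochInf (Q ^ 2) (Q ^ 2)) ^ 2) *
    ∑' m : ℕ, (-1) ^ m * Q ^ (m * (m + 1) + k * (2 * m + 1))

lemma Acoef_bound (Q : ℂ) (hQ : ‖Q‖ < 1) (k : ℕ) :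
    ‖Acoef Q k‖ ≤ (‖(1 : ℂ) / (qPochInf (Q ^ 2) (Q ^ 2)) ^ 2‖ * (1 - ‖Q‖)⁻¹) * ‖Q‖ ^ k := by
  have h0 : (0:ℝ) ≤ ‖Q‖ := norm_nonneg _
  have h1 : (0:ℝ) < 1 - ‖Q‖ := by linarith
  have hbound : ∀ m : ℕ, ‖(-1:ℂ) ^ m * Q ^ (m * (m + 1) + k * (2 * m + 1))‖
      ≤ ‖Q‖ ^ k * ‖Q‖ ^ m := by
    intro m
    rw [norm_mul, norm_pow, norm_pow, norm_neg, norm_one, one_pow, one_mul, ← pow_add]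
    exact pow_le_pow_of_le_one h0 hQ.le (by nlinarith)
  have hgeo : Summable fun m : ℕ => ‖Q‖ ^ k * ‖Q‖ ^ m :=
    (summable_geometric_of_lt_one h0 hQ).mul_left _
  have hsn : Summable fun m : ℕ =>
      ‖(-1:ℂ) ^ m * Q ^ (m * (m + 1) + k * (2 * m + 1))‖ :=
    hgeo.of_nonneg_of_le (fun _ => norm_nonneg _) hbound
  have hts : ‖∑' m : ℕ, (-1:ℂ) ^ m * Q ^ (m * (m + 1) + k * (2 * m + 1))‖
      ≤ (1 - ‖Q‖)⁻¹ * ‖Q‖ ^ k := by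
    calc ‖∑' m : ℕ, (-1:ℂ) ^ m * Q ^ (m * (m + 1) + k * (2 * m + 1))‖
        ≤ ∑' m : ℕ, ‖(-1:ℂ) ^ m * Q ^ (m * (m + 1) + k * (2 * m + 1))‖ :=
          norm_tsum_le_tsum_norm hsn
      _ ≤ ∑' m : ℕ, ‖Q‖ ^ k * ‖Q‖ ^ m := Summable.tsum_le_tsum hbound hsn hgeo
      _ = ‖Q‖ ^ k * (1 - ‖Q‖)⁻¹ := by
          rw [tsum_mul_left, tsum_geometric_of_lt_one h0 hQ]
      _ = (1 - ‖Q‖)⁻¹ * ‖Q‖ ^ k := by ring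
  calc ‖Acoef Q k‖ = ‖(1 : ℂ) / (qPochInf (Q ^ 2) (Q ^ 2)) ^ 2‖ *
        ‖∑' m : ℕ, (-1:ℂ) ^ m * Q ^ (m * (m + 1) + k * (2 * m + 1))‖ := norm_mul _ _
    _ ≤ ‖(1 : ℂ) / (qPochInf (Q ^ 2) (Q ^ 2)) ^ 2‖ * ((1 - ‖Q‖)⁻¹ * ‖Q‖ ^ k) :=
        mul_le_mul_of_nonneg_left hts (norm_nonneg _)
    _ = (‖(1 : ℂ) / (qPochInf (Q ^ 2) (Q ^ 2)) ^ 2‖ * (1 - ‖Q‖)⁻¹) * ‖Q‖ ^ k := by ring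

lemma summable_aux (Q : ℂ) (hQ : ‖Q‖ < 1) (c w : ℂ) (hw : ‖w * Q‖ < 1) (j : ℕ) :
    Summable fun k : ℕ => c * w ^ k * Acoef Q (k + j) := by
  set C : ℝ := ‖(1 : ℂ) / (qPochInf (Q ^ 2) (Q ^ 2)) ^ 2‖ * (1 - ‖Q‖)⁻¹ with hC
  have hC0 : 0 ≤ C := by
    apply mul_nonneg (norm_nonneg _)
    have : (0:ℝ) < 1 - ‖Q‖ := by linarith
    positivity
  apply Summable.of_norm_bounded (g := fun k => (‖c‖ * (C * ‖Q‖ ^ j)) * ‖w * Q‖ ^ k)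
    ((summable_geometric_of_lt_one (norm_nonneg _) hw).mul_left _)
  intro k
  have hb := Acoef_bound Q hQ (k + j)
  rw [← hC] at hb
  calc ‖c * w ^ k * Acoef Q (k + j)‖ = ‖c‖ * ‖w‖ ^ k * ‖Acoef Q (k + j)‖ := by
        rw [norm_mul, norm_mul, norm_pow]
    _ ≤ ‖c‖ * ‖w‖ ^ k * (C * ‖Q‖ ^ (k + j)) := by
        apply mul_le_mul_of_nonneg_left hb
        positivity
    _ = (‖c‖ * (C * ‖Q‖ ^ j)) * ‖w * Q‖ ^ k := by
        rw [norm_mul, mul_pow, pow_add]; ring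

set_option maxHeartbeats 1600000 in
/-- Comparing the coefficients of `z^{k+1}` in
`(z - z⁻¹) Σ_{r∈ℤ} z^r A_{|r|}` shows that the `q`-dimension of the level `-1`
irreducible `d_∞`-module of highest weight `Λ(k)` is `A_k - A_{k+2}`. -/
theorem stmt10 (Q z : ℂ) (hQ : ‖Q‖ < 1) (hz0 : z ≠ 0)
    (hz1 : ‖Q‖ < ‖z‖) (hz2 : ‖z * Q‖ < 1) :
    (z - z⁻¹) * ∑' r : ℤ, z ^ r * Acoef Q r.natAbs =
      ∑' k : ℕ, (z ^ (k + 1) - z⁻¹ ^ (k + 1)) * (Acoef Q k - Acoef Q (k + 2)) := by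
  set a : ℕ → ℂ := Acoef Q with ha
  have hzpos : 0 < ‖z‖ := norm_pos_iff.mpr hz0
  have hwi : ‖z⁻¹ * Q‖ < 1 := by
    rw [norm_mul, norm_inv, inv_mul_lt_one₀ hzpos]
    exact hz1
  have hinv : z⁻¹ * z = 1 := inv_mul_cancel₀ hz0
  -- summabilities
  have s1 : Summable fun k : ℕ => z ^ k * a k := by
    have := summable_aux Q hQ 1 z hz2 0
    exact this.congr fun k => by simp [ha]
  have sM : Summable fun k : ℕ => z ^ k * a (k + 1) := by
    have := summable_aux Q hQ 1 z hz2 1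
    exact this.congr fun k => by simp [ha]
  have sN : Summable fun k : ℕ => z⁻¹ ^ (k + 1) * a (k + 1) := by
    have := summable_aux Q hQ z⁻¹ z⁻¹ hwi 1
    exact this.congr fun k => by rw [pow_succ]; ring
  have sT1 : Summable fun k : ℕ => z ^ (k + 1) * a k := by
    have := summable_aux Q hQ z z hz2 0
    exact this.congr fun k => by rw [pow_succ]; ring_nf; rfl
  have sT2 : Summable fun k : ℕ => z ^ (k + 1) * a (k + 2) := by
    have := summable_aux Q hQ z z hz2 2
    exact this.congr fun k => by rw [pow_succ]; ring_nf; rfl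
  have sT3 : Summable fun k : ℕ => z⁻¹ ^ (k + 1) * a k := by
    have := summable_aux Q hQ z⁻¹ z⁻¹ hwi 0
    exact this.congr fun k => by rw [pow_succ]; ring_nf; rfl
  have sT4 : Summable fun k : ℕ => z⁻¹ ^ (k + 1) * a (k + 2) := by
    have := summable_aux Q hQ z⁻¹ z⁻¹ hwi 2
    exact this.congr fun k => by rw [pow_succ]; ring_nf; rfl
  set P : ℂ := ∑' k : ℕ, z ^ k * a k with hPdef
  set N : ℂ := ∑' k : ℕ, z⁻¹ ^ (k + 1) * a (k + 1) with hNdef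
  set M : ℂ := ∑' k : ℕ, z ^ k * a (k + 1) with hMdef
  set T2 : ℂ := ∑' k : ℕ, z ^ (k + 1) * a (k + 2) with hT2def
  set T4 : ℂ := ∑' k : ℕ, z⁻¹ ^ (k + 1) * a (k + 2) with hT4def
  -- LHS
  have hL : (∑' r : ℤ, z ^ r * a r.natAbs) = P + N := by
    have key : ∀ n : ℕ, z ^ (-((n : ℤ) + 1)) * a (-((n : ℤ) + 1)).natAbs
        = z⁻¹ ^ (n + 1) * a (n + 1) := by
      intro n
      have h1 : (-((n : ℤ) + 1)).natAbs = n + 1 := by omega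
      have h2 : z ^ (-((n : ℤ) + 1)) = z⁻¹ ^ (n + 1) := by
        rw [show -((n : ℤ) + 1) = -((n + 1 : ℕ) : ℤ) by push_cast; ring,
          zpow_neg, zpow_natCast, inv_pow]
      rw [h1, h2]
    have h₁ : Summable fun n : ℕ => z ^ (n : ℤ) * a ((n : ℤ)).natAbs :=
      s1.congr fun n => by simp [zpow_natCast]
    have h₂ : Summable fun n : ℕ => z ^ (-((n : ℤ) + 1)) * a (-((n : ℤ) + 1)).natAbs :=
      sN.congr fun n => (key n).symm
    calc (∑' r : ℤ, z ^ r * a r.natAbs)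
        = (∑' n : ℕ, z ^ (n : ℤ) * a ((n : ℤ)).natAbs)
          + ∑' n : ℕ, z ^ (-((n : ℤ) + 1)) * a (-((n : ℤ) + 1)).natAbs :=
          tsum_of_nat_of_neg_add_one h₁ h₂
      _ = P + N := by
          rw [tsum_congr key, tsum_congr (fun n : ℕ => by simp [zpow_natCast] :
            ∀ n : ℕ, z ^ (n : ℤ) * a ((n : ℤ)).natAbs = z ^ n * a n)]
  -- RHS expansion
  have hR : (∑' k : ℕ, (z ^ (k + 1) - z⁻¹ ^ (k + 1)) * (a k - a (k + 2)))
      = ((∑' k : ℕ, z ^ (k + 1) * a k) + T4)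
        - (T2 + ∑' k : ℕ, z⁻¹ ^ (k + 1) * a k) := by
    rw [hT2def, hT4def, ← Summable.tsum_add sT1 sT4, ← Summable.tsum_add sT2 sT3,
      ← Summable.tsum_sub (sT1.add sT4) (sT2.add sT3)]
    exact tsum_congr fun k => by ring
  -- evaluate pieces
  have hT1 : (∑' k : ℕ, z ^ (k + 1) * a k) = z * P := by
    rw [hPdef, ← tsum_mul_left]
    exact tsum_congr fun k => by rw [pow_succ]; ring
  have hP : P = a 0 + z * M := by
    rw [hPdef, Summable.tsum_eq_zero_add s1, hMdef, ← tsum_mul_left]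
    congr 1
    · simp
    · exact tsum_congr fun k => by rw [pow_succ]; ring
  have hM : M = a 1 + T2 := by
    rw [hMdef, Summable.tsum_eq_zero_add sM, hT2def]
    congr 1
    · simp
  have hT3 : (∑' k : ℕ, z⁻¹ ^ (k + 1) * a k) = z⁻¹ * a 0 + z⁻¹ * N := by
    rw [Summable.tsum_eq_zero_add sT3, hNdef, ← tsum_mul_left]
    congr 1
    · simp
    · exact tsum_congr fun k => by rw [pow_succ]; ring
  have hN : N = z⁻¹ * a 1 + z⁻¹ * T4 := by
    rw [hNdef, Summable.tsum_eq_zero_add sN, hT4def, ← tsum_mul_left]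
    congr 1
    · simp
    · exact tsum_congr fun k => by rw [pow_succ]; ring
  rw [hL, hR, hT1, hT3]
  linear_combination (-z⁻¹) * hP + z * hN - hM + (T4 + a 1 - M) * hinv
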